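/- Let v ∈ ℝ² and let O = {g·v : g ∈ G} be its orbit under G. If O has cardinality 3, then each of the three lines {(x,y) ∈ ℝ² : y = 0}, {(x,y) : y = √3·x}, and {(x,y) : y = −√3·x} contains exactly one point of O (in particular O is contained in the union of these three lines). If O has cardinality 6, then O is disjoint from the union of these three lines. -/

import Mathlib

open Complex

noncomputable def rotPerm : Equiv.Perm ℂ :=
  Equiv.mulLeft₀ (Complex.exp (2 * Real.pi * Complex.I / 3)) (Complex.exp_ne_zero _)

noncomputable def conjPerm : Equiv.Perm ℂ :=
  ⟨fun z => (starRingEnd ℂ) z, fun z => (starRingEnd ℂ) z,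
    fun z => by simp, fun z => by simp⟩

noncomputable def dihedralG : Subgroup (Equiv.Perm ℂ) :=
  Subgroup.closure {rotPerm, conjPerm}

def Gorbit (v : ℂ) : Set ℂ := {z : ℂ | ∃ g ∈ dihedralG, g v = z}

/-- The three mirror lines of the reflections in the dihedral group:
`y = 0`, `y = √3·x` and `y = -√3·x` (identifying ℝ² with ℂ). -/
def mirror0 : Set ℂ := {z : ℂ | z.im = 0}
def mirror1 : Set ℂ := {z : ℂ | z.im = Real.sqrt 3 * z.re}
def mirror2 : Set ℂ := {z : ℂ | z.im = -(Real.sqrt 3) * z.re}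


noncomputable def W : ℂ := Complex.exp (2 * Real.pi * Complex.I / 3)

lemma W_def' : W = Complex.exp ((2 * Real.pi / 3 : ℝ) * Complex.I) := by
  unfold W; congr 1; push_cast; ring

lemma W_re : W.re = -(1/2) := by
  rw [W_def', Complex.exp_ofReal_mul_I_re,
    show (2 * Real.pi / 3 : ℝ) = Real.pi - Real.pi/3 by ring,
    Real.cos_pi_sub, Real.cos_pi_div_three]

lemma W_im : W.im = Real.sqrt 3 / 2 := by
  rw [W_def', Complex.exp_ofReal_mul_I_im,
    show (2 * Real.pi / 3 : ℝ) = Real.pi - Real.pi/3 by ring,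
    Real.sin_pi_sub, Real.sin_pi_div_three]

lemma W3 : W^3 = 1 := by
  rw [W, ← Complex.exp_nat_mul]
  rw [show (3:ℕ) * (2 * (Real.pi:ℂ) * Complex.I / 3) = 2 * Real.pi * Complex.I by
    push_cast; ring]
  exact Complex.exp_two_pi_mul_I

lemma conjW : (starRingEnd ℂ) W = W^2 := by
  have h3 : Real.sqrt 3 ^ 2 = 3 := Real.sq_sqrt (by norm_num)
  apply Complex.ext <;>
    simp [Complex.conj_re, Complex.conj_im, pow_two, Complex.mul_re, Complex.mul_im, W_re, W_im]
  all_goals nlinarith [h3]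

lemma W_ne_one : W ≠ 1 := by
  intro h
  have := congrArg Complex.im h
  rw [W_im] at this
  simp at this

lemma W_ne_zero : W ≠ 0 := Complex.exp_ne_zero _

lemma W2_ne_one : W^2 ≠ 1 := by
  intro h
  apply W_ne_one
  have : W^3 = W := by rw [pow_succ, h, one_mul]
  rw [W3] at this; exact this.symm

lemma W_ne_W2 : W ≠ W^2 := by
  intro h
  apply W_ne_one
  have h2 : W * 1 = W * W := by rw [mul_one]; exact h.trans (pow_two W)
  exact (mul_left_cancel₀ W_ne_zero h2).symm

lemma Wmod (n : ℕ) : W^n = W^(n % 3) := by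
  conv_lhs => rw [← Nat.div_add_mod n 3]
  rw [pow_add, pow_mul, W3, one_pow, one_mul]

lemma cancelW {a b : ℕ} {x y : ℂ} (h : W^a * x = W^b * y) : y = W^(a + 2*b) * x := by
  have h1 : W^(3*b) = 1 := by rw [pow_mul, W3, one_pow]
  calc y = W^(3*b) * y := by rw [h1, one_mul]
    _ = W^(2*b) * (W^b * y) := by rw [← mul_assoc, ← pow_add]; ring_nf
    _ = W^(2*b) * (W^a * x) := by rw [h]
    _ = W^(a + 2*b) * x := by rw [← mul_assoc, ← pow_add]; ring_nf

lemma W2_re : (W^2).re = -(1/2) := by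
  have h3 : Real.sqrt 3 ^ 2 = 3 := Real.sq_sqrt (by norm_num)
  rw [pow_two, Complex.mul_re, W_re, W_im]; nlinarith

lemma W2_im : (W^2).im = -(Real.sqrt 3/2) := by
  rw [pow_two, Complex.mul_im, W_re, W_im]; ring

lemma mem_mirror0_iff (z : ℂ) : z ∈ mirror0 ↔ (starRingEnd ℂ) z = z :=
  (Complex.conj_eq_iff_im).symm

lemma mem_mirror1_iff (z : ℂ) : z ∈ mirror1 ↔ (starRingEnd ℂ) z = W^2 * z := by
  have h3 : Real.sqrt 3 ^ 2 = 3 := Real.sq_sqrt (by norm_num)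
  simp only [mirror1, Set.mem_setOf_eq, Complex.ext_iff, Complex.conj_re, Complex.conj_im,
    Complex.mul_re, Complex.mul_im, W2_re, W2_im]
  constructor
  · intro h
    refine ⟨?_, ?_⟩
    · linear_combination (-(Real.sqrt 3)/2) * h + (-z.re/2) * h3
    · linear_combination (-1/2 : ℝ) * h
  · rintro ⟨h1, h2⟩; linear_combination (-2 : ℝ) * h2

lemma mem_mirror2_iff (z : ℂ) : z ∈ mirror2 ↔ (starRingEnd ℂ) z = W * z := by
  have h3 : Real.sqrt 3 ^ 2 = 3 := Real.sq_sqrt (by norm_num)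
  simp only [mirror2, Set.mem_setOf_eq, Complex.ext_iff, Complex.conj_re, Complex.conj_im,
    Complex.mul_re, Complex.mul_im, W_re, W_im]
  constructor
  · intro h
    refine ⟨?_, ?_⟩
    · linear_combination (Real.sqrt 3/2) * h + (-z.re/2) * h3
    · linear_combination (-1/2 : ℝ) * h
  · rintro ⟨h1, h2⟩; linear_combination (-2 : ℝ) * h2

noncomputable def Oset (v : ℂ) : Set ℂ :=
  {v, W*v, W^2*v, (starRingEnd ℂ) v, W*(starRingEnd ℂ) v, W^2*(starRingEnd ℂ) v}

lemma Oset_finite (v : ℂ) : (Oset v).Finite := by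
  unfold Oset
  exact Set.toFinite _

lemma rotPerm_apply (z : ℂ) : rotPerm z = W * z := rfl

lemma conjPerm_apply (z : ℂ) : conjPerm z = (starRingEnd ℂ) z := rfl

lemma conjPerm_inv_apply (z : ℂ) : conjPerm⁻¹ z = (starRingEnd ℂ) z := rfl

lemma rotPerm_inv_apply (z : ℂ) : rotPerm⁻¹ z = W^2 * z := by
  have h : rotPerm (W^2 * z) = z := by rw [rotPerm_apply]; linear_combination z * W3
  calc rotPerm⁻¹ z = rotPerm⁻¹ (rotPerm (W^2*z)) := by rw [h]
    _ = W^2*z := Equiv.symm_apply_apply _ _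

lemma mapsW {v : ℂ} : ∀ z ∈ Oset v, W * z ∈ Oset v := by
  intro z hz
  simp only [Oset, Set.mem_insert_iff, Set.mem_singleton_iff] at hz ⊢
  rcases hz with rfl|rfl|rfl|rfl|rfl|rfl
  · exact Or.inr (Or.inl rfl)
  · refine Or.inr (Or.inr (Or.inl ?_)); ring
  · refine Or.inl ?_; linear_combination v * W3
  · exact Or.inr (Or.inr (Or.inr (Or.inr (Or.inl rfl))))
  · refine Or.inr (Or.inr (Or.inr (Or.inr (Or.inr ?_)))); ring
  · refine Or.inr (Or.inr (Or.inr (Or.inl ?_))); linear_combination ((starRingEnd ℂ) v) * W3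

lemma mapsC {v : ℂ} : ∀ z ∈ Oset v, (starRingEnd ℂ) z ∈ Oset v := by
  intro z hz
  simp only [Oset, Set.mem_insert_iff, Set.mem_singleton_iff] at hz ⊢
  rcases hz with rfl|rfl|rfl|rfl|rfl|rfl
  · exact Or.inr (Or.inr (Or.inr (Or.inl rfl)))
  · refine Or.inr (Or.inr (Or.inr (Or.inr (Or.inr ?_)))); rw [map_mul, conjW]
  · refine Or.inr (Or.inr (Or.inr (Or.inr (Or.inl ?_))))
    rw [map_mul, map_pow, conjW]; linear_combination (W * (starRingEnd ℂ) v) * W3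
  · exact Or.inl (Complex.conj_conj v)
  · refine Or.inr (Or.inr (Or.inl ?_)); rw [map_mul, conjW, Complex.conj_conj]
  · refine Or.inr (Or.inl ?_)
    rw [map_mul, map_pow, conjW, Complex.conj_conj]; linear_combination (W * v) * W3

lemma orbit_eq (v : ℂ) : Gorbit v = Oset v := by
  apply Set.Subset.antisymm
  · rintro z ⟨g, hg, rfl⟩
    have key : ∀ z ∈ Oset v, g z ∈ Oset v ∧ g⁻¹ z ∈ Oset v := by
      induction hg using Subgroup.closure_induction with
      | mem x hx =>
        simp only [Set.mem_insert_iff, Set.mem_singleton_iff] at hx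
        rcases hx with rfl|rfl
        · intro z hz
          refine ⟨by rw [rotPerm_apply]; exact mapsW z hz, ?_⟩
          rw [rotPerm_inv_apply, show W^2*z = W*(W*z) by ring]
          exact mapsW _ (mapsW z hz)
        · intro z hz
          exact ⟨by rw [conjPerm_apply]; exact mapsC z hz,
            by rw [conjPerm_inv_apply]; exact mapsC z hz⟩
      | one =>
        intro z hz
        constructor <;> simpa using hz
      | mul x y hx hy ihx ihy =>
        intro z hz
        constructor
        · rw [Equiv.Perm.mul_apply]; exact (ihx _ ((ihy z hz).1)).1
        · rw [mul_inv_rev, Equiv.Perm.mul_apply]; exact (ihy _ ((ihx z hz).2)).2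
      | inv x hx ihx =>
        intro z hz
        exact ⟨(ihx z hz).2, by rw [inv_inv]; exact (ihx z hz).1⟩
    exact (key v (by simp [Oset])).1
  · intro z hz
    have hrot : rotPerm ∈ dihedralG := Subgroup.subset_closure (Set.mem_insert _ _)
    have hconj : conjPerm ∈ dihedralG := Subgroup.subset_closure (Set.mem_insert_of_mem _ rfl)
    simp only [Oset, Set.mem_insert_iff, Set.mem_singleton_iff] at hz
    rcases hz with rfl|rfl|rfl|rfl|rfl|rfl
    · exact ⟨1, one_mem _, rfl⟩
    · exact ⟨rotPerm, hrot, rfl⟩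
    · exact ⟨rotPerm * rotPerm, mul_mem hrot hrot,
        by rw [Equiv.Perm.mul_apply, rotPerm_apply, rotPerm_apply]; ring⟩
    · exact ⟨conjPerm, hconj, rfl⟩
    · exact ⟨rotPerm * conjPerm, mul_mem hrot hconj,
        by rw [Equiv.Perm.mul_apply, rotPerm_apply, conjPerm_apply]⟩
    · exact ⟨rotPerm * (rotPerm * conjPerm), mul_mem hrot (mul_mem hrot hconj),
        by rw [Equiv.Perm.mul_apply, Equiv.Perm.mul_apply, rotPerm_apply, rotPerm_apply,
          conjPerm_apply]; ring⟩

lemma Gorbit_zero : Gorbit 0 = {0} := by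
  rw [orbit_eq]
  ext z; simp [Oset]

lemma veq_pow {v : ℂ} (hv : v ≠ 0) {m : ℕ} (hm : m % 3 ≠ 0) (h : v = W^m * v) : False := by
  rw [Wmod] at h
  have : m % 3 = 1 ∨ m % 3 = 2 := by omega
  rcases this with h1|h1 <;> rw [h1] at h
  · rw [pow_one] at h
    exact W_ne_one (mul_right_cancel₀ hv (by rw [one_mul]; exact h)).symm
  · exact W2_ne_one (mul_right_cancel₀ hv (by rw [one_mul]; exact h)).symm

lemma clash {v : ℂ} (hv : v ≠ 0) {a b : ℕ} (hab : (a + 2*b) % 3 ≠ 0)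
    (h : W^a * v = W^b * v) : False :=
  veq_pow hv hab (cancelW h)

lemma conj_mem {v : ℂ} (m : ℕ) (h : (starRingEnd ℂ) v = W^m * v) :
    (starRingEnd ℂ) v ∈ ({v, W*v, W^2*v} : Set ℂ) := by
  rw [Wmod] at h
  have : m % 3 = 0 ∨ m % 3 = 1 ∨ m % 3 = 2 := by omega
  rcases this with h1|h1|h1 <;> rw [h1] at h <;> rw [h] <;> simp [pow_one, pow_zero]

lemma orbit_collapse {v : ℂ}
    (hk : (starRingEnd ℂ) v = v ∨ (starRingEnd ℂ) v = W*v ∨ (starRingEnd ℂ) v = W^2*v) :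
    Gorbit v = {v, W*v, W^2*v} := by
  rw [orbit_eq]
  unfold Oset
  rcases hk with hk|hk|hk <;> rw [hk]
  · ext z; simp only [Set.mem_insert_iff, Set.mem_singleton_iff]; tauto
  · rw [show W*(W*v) = W^2*v from by ring, show W^2*(W*v) = v from by linear_combination v * W3]
    ext z; simp only [Set.mem_insert_iff, Set.mem_singleton_iff]; tauto
  · rw [show W*(W^2*v) = v from by linear_combination v * W3,
      show W^2*(W^2*v) = W*v from by linear_combination (W*v) * W3]
    ext z; simp only [Set.mem_insert_iff, Set.mem_singleton_iff]; tauto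

theorem orbit_three_six_mirrors (v : ℂ) :
    ((Gorbit v).ncard = 3 →
      ((∃! p, p ∈ Gorbit v ∩ mirror0) ∧ (∃! p, p ∈ Gorbit v ∩ mirror1) ∧
        (∃! p, p ∈ Gorbit v ∩ mirror2))) ∧
    ((Gorbit v).ncard = 6 → Gorbit v ∩ (mirror0 ∪ mirror1 ∪ mirror2) = ∅) := by
  constructor
  · intro h3card
    have hv : v ≠ 0 := by
      intro h0; subst h0
      rw [Gorbit_zero, Set.ncard_singleton] at h3card; omega
    have hA : (starRingEnd ℂ) v = v ∨ (starRingEnd ℂ) v = W*v ∨ (starRingEnd ℂ) v = W^2*v := by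
      by_contra hc
      push_neg at hc
      obtain ⟨hc0, hc1, hc2⟩ := hc
      have hne1 : v ≠ W * v := fun h => W_ne_one (mul_right_cancel₀ hv (by rw [one_mul]; exact h)).symm
      have hne2 : v ≠ W^2 * v := fun h => W2_ne_one (mul_right_cancel₀ hv (by rw [one_mul]; exact h)).symm
      have hne3 : W*v ≠ W^2*v := fun h => W_ne_W2 (mul_right_cancel₀ hv h)
      have hsub : ({v, W*v, W^2*v, (starRingEnd ℂ) v} : Set ℂ) ⊆ Gorbit v := by
        rw [orbit_eq]
        intro z hz
        simp only [Oset, Set.mem_insert_iff, Set.mem_singleton_iff] at hz ⊢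
        tauto
      have h4 : ({v, W*v, W^2*v, (starRingEnd ℂ) v} : Set ℂ).ncard = 4 := by
        rw [Set.ncard_insert_of_notMem (by
            simp only [Set.mem_insert_iff, Set.mem_singleton_iff]
            push_neg
            exact ⟨hne1, hne2, fun h => hc0 h.symm⟩),
          Set.ncard_insert_of_notMem (by
            simp only [Set.mem_insert_iff, Set.mem_singleton_iff]
            push_neg
            exact ⟨hne3, fun h => hc1 h.symm⟩),
          Set.ncard_insert_of_notMem (by
            simp only [Set.mem_singleton_iff]
            exact fun h => hc2 h.symm),
          Set.ncard_singleton]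
      have hle := Set.ncard_le_ncard hsub ((orbit_eq v) ▸ Oset_finite v)
      rw [h4, h3card] at hle
      omega
    rcases hA with hk|hk|hk
    · have hS : Gorbit v = {v, W*v, W^2*v} := orbit_collapse (Or.inl hk)
      refine ⟨?_, ?_, ?_⟩
      · refine ⟨v, ⟨?_, ?_⟩, ?_⟩
        · rw [hS]; simp
        · rw [mem_mirror0_iff]
          simp only [map_mul, map_pow, conjW, hk] <;> (first | ring1 | linear_combination (W^0*v) * W3 | linear_combination (W^1*v)*W3 | linear_combination (W^2*v)*W3 | linear_combination (W^3*v)*W3 | linear_combination (W^4*v)*W3)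
        · rintro q ⟨hqO, hqm⟩
          rw [hS] at hqO
          rw [mem_mirror0_iff] at hqm
          simp only [Set.mem_insert_iff, Set.mem_singleton_iff] at hqO
          rcases hqO with hq|hq|hq <;> rw [hq] at hqm ⊢
          · simp only [map_mul, map_pow, conjW, hk] at hqm
            exact absurd (show W^2 * v = W^1 * v from by linear_combination hqm) (fun h => clash hv (by norm_num) h)
          · simp only [map_mul, map_pow, conjW, hk] at hqm
            exact absurd (show W^4 * v = W^2 * v from by linear_combination hqm) (fun h => clash hv (by norm_num) h)
      · refine ⟨W^2*v, ⟨?_, ?_⟩, ?_⟩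
        · rw [hS]; simp
        · rw [mem_mirror1_iff]
          simp only [map_mul, map_pow, conjW, hk] <;> (first | ring1 | linear_combination (W^0*v) * W3 | linear_combination (W^1*v)*W3 | linear_combination (W^2*v)*W3 | linear_combination (W^3*v)*W3 | linear_combination (W^4*v)*W3)
        · rintro q ⟨hqO, hqm⟩
          rw [hS] at hqO
          rw [mem_mirror1_iff] at hqm
          simp only [Set.mem_insert_iff, Set.mem_singleton_iff] at hqO
          rcases hqO with hq|hq|hq <;> rw [hq] at hqm ⊢
          · simp only [map_mul, map_pow, conjW, hk] at hqm
            exact absurd (show W^0 * v = W^2 * v from by linear_combination hqm) (fun h => clash hv (by norm_num) h)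
          · simp only [map_mul, map_pow, conjW, hk] at hqm
            exact absurd (show W^2 * v = W^3 * v from by linear_combination hqm) (fun h => clash hv (by norm_num) h)
      · refine ⟨W*v, ⟨?_, ?_⟩, ?_⟩
        · rw [hS]; simp
        · rw [mem_mirror2_iff]
          simp only [map_mul, map_pow, conjW, hk] <;> (first | ring1 | linear_combination (W^0*v) * W3 | linear_combination (W^1*v)*W3 | linear_combination (W^2*v)*W3 | linear_combination (W^3*v)*W3 | linear_combination (W^4*v)*W3)
        · rintro q ⟨hqO, hqm⟩
          rw [hS] at hqO
          rw [mem_mirror2_iff] at hqm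
          simp only [Set.mem_insert_iff, Set.mem_singleton_iff] at hqO
          rcases hqO with hq|hq|hq <;> rw [hq] at hqm ⊢
          · simp only [map_mul, map_pow, conjW, hk] at hqm
            exact absurd (show W^0 * v = W^1 * v from by linear_combination hqm) (fun h => clash hv (by norm_num) h)
          · simp only [map_mul, map_pow, conjW, hk] at hqm
            exact absurd (show W^4 * v = W^3 * v from by linear_combination hqm) (fun h => clash hv (by norm_num) h)
    · have hS : Gorbit v = {v, W*v, W^2*v} := orbit_collapse (Or.inr (Or.inl hk))
      refine ⟨?_, ?_, ?_⟩
      · refine ⟨W^2*v, ⟨?_, ?_⟩, ?_⟩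
        · rw [hS]; simp
        · rw [mem_mirror0_iff]
          simp only [map_mul, map_pow, conjW, hk] <;> (first | ring1 | linear_combination (W^0*v) * W3 | linear_combination (W^1*v)*W3 | linear_combination (W^2*v)*W3 | linear_combination (W^3*v)*W3 | linear_combination (W^4*v)*W3)
        · rintro q ⟨hqO, hqm⟩
          rw [hS] at hqO
          rw [mem_mirror0_iff] at hqm
          simp only [Set.mem_insert_iff, Set.mem_singleton_iff] at hqO
          rcases hqO with hq|hq|hq <;> rw [hq] at hqm ⊢
          · simp only [map_mul, map_pow, conjW, hk] at hqm
            exact absurd (show W^1 * v = W^0 * v from by linear_combination hqm) (fun h => clash hv (by norm_num) h)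
          · simp only [map_mul, map_pow, conjW, hk] at hqm
            exact absurd (show W^3 * v = W^1 * v from by linear_combination hqm) (fun h => clash hv (by norm_num) h)
      · refine ⟨W*v, ⟨?_, ?_⟩, ?_⟩
        · rw [hS]; simp
        · rw [mem_mirror1_iff]
          simp only [map_mul, map_pow, conjW, hk] <;> (first | ring1 | linear_combination (W^0*v) * W3 | linear_combination (W^1*v)*W3 | linear_combination (W^2*v)*W3 | linear_combination (W^3*v)*W3 | linear_combination (W^4*v)*W3)
        · rintro q ⟨hqO, hqm⟩
          rw [hS] at hqO
          rw [mem_mirror1_iff] at hqm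
          simp only [Set.mem_insert_iff, Set.mem_singleton_iff] at hqO
          rcases hqO with hq|hq|hq <;> rw [hq] at hqm ⊢
          · simp only [map_mul, map_pow, conjW, hk] at hqm
            exact absurd (show W^1 * v = W^2 * v from by linear_combination hqm) (fun h => clash hv (by norm_num) h)
          · simp only [map_mul, map_pow, conjW, hk] at hqm
            exact absurd (show W^5 * v = W^4 * v from by linear_combination hqm) (fun h => clash hv (by norm_num) h)
      · refine ⟨v, ⟨?_, ?_⟩, ?_⟩
        · rw [hS]; simp
        · rw [mem_mirror2_iff]
          simp only [map_mul, map_pow, conjW, hk] <;> (first | ring1 | linear_combination (W^0*v) * W3 | linear_combination (W^1*v)*W3 | linear_combination (W^2*v)*W3 | linear_combination (W^3*v)*W3 | linear_combination (W^4*v)*W3)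
        · rintro q ⟨hqO, hqm⟩
          rw [hS] at hqO
          rw [mem_mirror2_iff] at hqm
          simp only [Set.mem_insert_iff, Set.mem_singleton_iff] at hqO
          rcases hqO with hq|hq|hq <;> rw [hq] at hqm ⊢
          · simp only [map_mul, map_pow, conjW, hk] at hqm
            exact absurd (show W^3 * v = W^2 * v from by linear_combination hqm) (fun h => clash hv (by norm_num) h)
          · simp only [map_mul, map_pow, conjW, hk] at hqm
            exact absurd (show W^5 * v = W^3 * v from by linear_combination hqm) (fun h => clash hv (by norm_num) h)
    · have hS : Gorbit v = {v, W*v, W^2*v} := orbit_collapse (Or.inr (Or.inr hk))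
      refine ⟨?_, ?_, ?_⟩
      · refine ⟨W*v, ⟨?_, ?_⟩, ?_⟩
        · rw [hS]; simp
        · rw [mem_mirror0_iff]
          simp only [map_mul, map_pow, conjW, hk] <;> (first | ring1 | linear_combination (W^0*v) * W3 | linear_combination (W^1*v)*W3 | linear_combination (W^2*v)*W3 | linear_combination (W^3*v)*W3 | linear_combination (W^4*v)*W3)
        · rintro q ⟨hqO, hqm⟩
          rw [hS] at hqO
          rw [mem_mirror0_iff] at hqm
          simp only [Set.mem_insert_iff, Set.mem_singleton_iff] at hqO
          rcases hqO with hq|hq|hq <;> rw [hq] at hqm ⊢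
          · simp only [map_mul, map_pow, conjW, hk] at hqm
            exact absurd (show W^2 * v = W^0 * v from by linear_combination hqm) (fun h => clash hv (by norm_num) h)
          · simp only [map_mul, map_pow, conjW, hk] at hqm
            exact absurd (show W^6 * v = W^2 * v from by linear_combination hqm) (fun h => clash hv (by norm_num) h)
      · refine ⟨v, ⟨?_, ?_⟩, ?_⟩
        · rw [hS]; simp
        · rw [mem_mirror1_iff]
          simp only [map_mul, map_pow, conjW, hk] <;> (first | ring1 | linear_combination (W^0*v) * W3 | linear_combination (W^1*v)*W3 | linear_combination (W^2*v)*W3 | linear_combination (W^3*v)*W3 | linear_combination (W^4*v)*W3)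
        · rintro q ⟨hqO, hqm⟩
          rw [hS] at hqO
          rw [mem_mirror1_iff] at hqm
          simp only [Set.mem_insert_iff, Set.mem_singleton_iff] at hqO
          rcases hqO with hq|hq|hq <;> rw [hq] at hqm ⊢
          · simp only [map_mul, map_pow, conjW, hk] at hqm
            exact absurd (show W^4 * v = W^3 * v from by linear_combination hqm) (fun h => clash hv (by norm_num) h)
          · simp only [map_mul, map_pow, conjW, hk] at hqm
            exact absurd (show W^6 * v = W^4 * v from by linear_combination hqm) (fun h => clash hv (by norm_num) h)
      · refine ⟨W^2*v, ⟨?_, ?_⟩, ?_⟩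
        · rw [hS]; simp
        · rw [mem_mirror2_iff]
          simp only [map_mul, map_pow, conjW, hk] <;> (first | ring1 | linear_combination (W^0*v) * W3 | linear_combination (W^1*v)*W3 | linear_combination (W^2*v)*W3 | linear_combination (W^3*v)*W3 | linear_combination (W^4*v)*W3)
        · rintro q ⟨hqO, hqm⟩
          rw [hS] at hqO
          rw [mem_mirror2_iff] at hqm
          simp only [Set.mem_insert_iff, Set.mem_singleton_iff] at hqO
          rcases hqO with hq|hq|hq <;> rw [hq] at hqm ⊢
          · simp only [map_mul, map_pow, conjW, hk] at hqm
            exact absurd (show W^2 * v = W^1 * v from by linear_combination hqm) (fun h => clash hv (by norm_num) h)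
          · simp only [map_mul, map_pow, conjW, hk] at hqm
            exact absurd (show W^4 * v = W^2 * v from by linear_combination hqm) (fun h => clash hv (by norm_num) h)
  · intro h6card
    have hv : v ≠ 0 := by
      intro h0; subst h0
      rw [Gorbit_zero, Set.ncard_singleton] at h6card; omega
    have hB : (starRingEnd ℂ) v ∉ ({v, W*v, W^2*v} : Set ℂ) := by
      intro hmem
      simp only [Set.mem_insert_iff, Set.mem_singleton_iff] at hmem
      have hS : Gorbit v = {v, W*v, W^2*v} := orbit_collapse hmem
      have h1 : ({v, W*v, W^2*v} : Set ℂ).ncard ≤ 3 := by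
        calc ({v, W*v, W^2*v} : Set ℂ).ncard ≤ ({W*v, W^2*v} : Set ℂ).ncard + 1 := Set.ncard_insert_le _ _
          _ ≤ (({W^2*v} : Set ℂ).ncard + 1) + 1 := by gcongr; exact Set.ncard_insert_le _ _
          _ ≤ 3 := by rw [Set.ncard_singleton]
      rw [hS] at h6card
      rw [h6card] at h1
      omega
    ext z
    simp only [Set.mem_inter_iff, Set.mem_empty_iff_false, iff_false, not_and]
    intro hzO hzm
    rw [orbit_eq] at hzO
    simp only [Oset, Set.mem_insert_iff, Set.mem_singleton_iff] at hzO
    rcases hzm with (hm|hm)|hm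
    · rw [mem_mirror0_iff] at hm
      rcases hzO with hq|hq|hq|hq|hq|hq <;> rw [hq] at hm
      · try simp only [map_mul, map_pow, conjW, Complex.conj_conj] at hm
        exact hB (conj_mem _ (cancelW (show W^0 * v = W^0 * (starRingEnd ℂ) v from by linear_combination -hm)))
      · try simp only [map_mul, map_pow, conjW, Complex.conj_conj] at hm
        exact hB (conj_mem _ (cancelW (show W^1 * v = W^2 * (starRingEnd ℂ) v from by linear_combination -hm)))
      · try simp only [map_mul, map_pow, conjW, Complex.conj_conj] at hm
        exact hB (conj_mem _ (cancelW (show W^2 * v = W^4 * (starRingEnd ℂ) v from by linear_combination -hm)))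
      · try simp only [map_mul, map_pow, conjW, Complex.conj_conj] at hm
        exact hB (conj_mem _ (cancelW (show W^0 * v = W^0 * (starRingEnd ℂ) v from by linear_combination hm)))
      · try simp only [map_mul, map_pow, conjW, Complex.conj_conj] at hm
        exact hB (conj_mem _ (cancelW (show W^2 * v = W^1 * (starRingEnd ℂ) v from by linear_combination hm)))
      · try simp only [map_mul, map_pow, conjW, Complex.conj_conj] at hm
        exact hB (conj_mem _ (cancelW (show W^4 * v = W^2 * (starRingEnd ℂ) v from by linear_combination hm)))
    · rw [mem_mirror1_iff] at hm
      rcases hzO with hq|hq|hq|hq|hq|hq <;> rw [hq] at hm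
      · try simp only [map_mul, map_pow, conjW, Complex.conj_conj] at hm
        exact hB (conj_mem _ (cancelW (show W^2 * v = W^0 * (starRingEnd ℂ) v from by linear_combination -hm)))
      · try simp only [map_mul, map_pow, conjW, Complex.conj_conj] at hm
        exact hB (conj_mem _ (cancelW (show W^3 * v = W^2 * (starRingEnd ℂ) v from by linear_combination -hm)))
      · try simp only [map_mul, map_pow, conjW, Complex.conj_conj] at hm
        exact hB (conj_mem _ (cancelW (show W^4 * v = W^4 * (starRingEnd ℂ) v from by linear_combination -hm)))
      · try simp only [map_mul, map_pow, conjW, Complex.conj_conj] at hm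
        exact hB (conj_mem _ (cancelW (show W^0 * v = W^2 * (starRingEnd ℂ) v from by linear_combination hm)))
      · try simp only [map_mul, map_pow, conjW, Complex.conj_conj] at hm
        exact hB (conj_mem _ (cancelW (show W^2 * v = W^3 * (starRingEnd ℂ) v from by linear_combination hm)))
      · try simp only [map_mul, map_pow, conjW, Complex.conj_conj] at hm
        exact hB (conj_mem _ (cancelW (show W^4 * v = W^4 * (starRingEnd ℂ) v from by linear_combination hm)))
    · rw [mem_mirror2_iff] at hm
      rcases hzO with hq|hq|hq|hq|hq|hq <;> rw [hq] at hm
      · try simp only [map_mul, map_pow, conjW, Complex.conj_conj] at hm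
        exact hB (conj_mem _ (cancelW (show W^1 * v = W^0 * (starRingEnd ℂ) v from by linear_combination -hm)))
      · try simp only [map_mul, map_pow, conjW, Complex.conj_conj] at hm
        exact hB (conj_mem _ (cancelW (show W^2 * v = W^2 * (starRingEnd ℂ) v from by linear_combination -hm)))
      · try simp only [map_mul, map_pow, conjW, Complex.conj_conj] at hm
        exact hB (conj_mem _ (cancelW (show W^3 * v = W^4 * (starRingEnd ℂ) v from by linear_combination -hm)))
      · try simp only [map_mul, map_pow, conjW, Complex.conj_conj] at hm
        exact hB (conj_mem _ (cancelW (show W^0 * v = W^1 * (starRingEnd ℂ) v from by linear_combination hm)))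
      · try simp only [map_mul, map_pow, conjW, Complex.conj_conj] at hm
        exact hB (conj_mem _ (cancelW (show W^2 * v = W^2 * (starRingEnd ℂ) v from by linear_combination hm)))
      · try simp only [map_mul, map_pow, conjW, Complex.conj_conj] at hm
        exact hB (conj_mem _ (cancelW (show W^4 * v = W^3 * (starRingEnd ℂ) v from by linear_combination hm)))
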